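/- Let a > 0 and b > 0. The function f(x) = Γ(a, b·x^(1/a)) is (strictly) decreasing on [0, ∞), and for any natural numbers k ≥ 1 and M ≥ 1, any c > 0, and any nonnegative reals R_1, …, R_M, R with ∑_{p=1}^M R_p^k ≤ M·R^k, it follows that ∑_{p=1}^M (1 − Γ(k/2, c·R_p²)/Γ(k/2)) ≤ M·(1 − Γ(k/2, c·R²)/Γ(k/2)). -/

import Mathlib

open Real Finset

/-- The upper incomplete gamma function `Γ(s, x) = ∫_x^∞ t^(s-1) e^(-t) dt`. -/
noncomputable def upperIncompleteGamma (s x : ℝ) : ℝ :=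
  ∫ t in Set.Ioi x, t ^ (s - 1) * Real.exp (-t)

open MeasureTheory Set

lemma uig_integrable {a : ℝ} (ha : 0 < a) :
    IntegrableOn (fun t : ℝ => t ^ (a - 1) * Real.exp (-t)) (Set.Ioi 0) :=
  (Real.GammaIntegral_convergent ha).congr_fun (fun t _ => mul_comm _ _) measurableSet_Ioi

lemma uig_split {a : ℝ} (ha : 0 < a) {y z : ℝ} (hy : 0 ≤ y) (hz : y ≤ z) :
    upperIncompleteGamma a y
      = (∫ t in Set.Ioc y z, t ^ (a - 1) * Real.exp (-t)) + upperIncompleteGamma a z := by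
  unfold upperIncompleteGamma
  rw [← setIntegral_union (Set.Ioc_disjoint_Ioi le_rfl) measurableSet_Ioi
    ((uig_integrable ha).mono_set (fun t ht => lt_of_le_of_lt hy ht.1))
    ((uig_integrable ha).mono_set (fun t ht => lt_of_le_of_lt hy (hz.trans_lt ht)))]
  rw [Set.Ioc_union_Ioi_eq_Ioi hz]

lemma uig_sub_interval {a : ℝ} (ha : 0 < a) {y z : ℝ} (hy : 0 < y) (hz : 0 < z) :
    upperIncompleteGamma a z
      = upperIncompleteGamma a y - ∫ t in y..z, t ^ (a - 1) * Real.exp (-t) := by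
  rcases le_total y z with h | h
  · rw [intervalIntegral.integral_of_le h, uig_split ha hy.le h]; ring
  · rw [intervalIntegral.integral_of_ge h, uig_split ha hz.le h]; ring

lemma uig_contOn (a : ℝ) :
    ContinuousOn (fun t : ℝ => t ^ (a - 1) * Real.exp (-t)) (Set.Ioi 0) := fun t ht =>
  (((Real.continuousAt_rpow_const t (a - 1) (Or.inl (ne_of_gt ht))).mul
    ((Real.continuous_exp.comp continuous_neg).continuousAt))).continuousWithinAt

lemma uig_hasDerivAt {a : ℝ} (ha : 0 < a) {y : ℝ} (hy : 0 < y) :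
    HasDerivAt (upperIncompleteGamma a) (-(y ^ (a - 1) * Real.exp (-y))) y := by
  set h : ℝ → ℝ := fun t => t ^ (a - 1) * Real.exp (-t) with hh
  have hcont : ContinuousAt h y :=
    ((Real.continuousAt_rpow_const y (a - 1) (Or.inl hy.ne')).mul
      ((Real.continuous_exp.comp continuous_neg).continuousAt))
  have hFTC : HasDerivAt (fun z => ∫ t in y..z, h t) (h y) y :=
    intervalIntegral.integral_hasDerivAt_right (by simp)
      ⟨Set.Ioi 0, Ioi_mem_nhds hy, (uig_contOn a).aestronglyMeasurable measurableSet_Ioi⟩ hcont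
  have hF : HasDerivAt (fun z => upperIncompleteGamma a y - ∫ t in y..z, h t) (-(h y)) y := by
    exact hFTC.const_sub (upperIncompleteGamma a y)
  refine hF.congr_of_eventuallyEq ?_
  filter_upwards [Ioi_mem_nhds hy] with z hz
  exact uig_sub_interval ha hy hz

lemma uig_continuousOn {a : ℝ} (ha : 0 < a) :
    ContinuousOn (upperIncompleteGamma a) (Set.Ici 0) := by
  intro x hx
  rcases eq_or_lt_of_le (Set.mem_Ici.mp hx) with rfl | hx'
  · have hint : IntegrableOn (fun t : ℝ => t ^ (a - 1) * Real.exp (-t)) (Set.Icc 0 1) := by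
      rw [integrableOn_Icc_iff_integrableOn_Ioc]
      exact (uig_integrable ha).mono_set Set.Ioc_subset_Ioi_self
    have hc : ContinuousOn
        (fun z => upperIncompleteGamma a 0 - ∫ t in Set.Ioc 0 z, t ^ (a - 1) * Real.exp (-t))
        (Set.Icc 0 1) :=
      continuousOn_const.sub (intervalIntegral.continuousOn_primitive hint)
    have heq : Set.EqOn
        (fun z => upperIncompleteGamma a 0 - ∫ t in Set.Ioc 0 z, t ^ (a - 1) * Real.exp (-t))
        (upperIncompleteGamma a) (Set.Icc 0 1) := by
      intro z hz
      simp only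
      rw [uig_split ha le_rfl hz.1]; ring
    have := (hc.congr heq.symm) 0 (Set.mem_Icc.mpr ⟨le_rfl, zero_le_one⟩)
    rw [ContinuousWithinAt, ← nhdsWithin_Icc_eq_nhdsGE zero_lt_one]
    exact this
  · exact ((uig_hasDerivAt ha hx').continuousAt).continuousWithinAt

lemma comp_hasDerivAt {a b : ℝ} (ha : 0 < a) (hb : 0 < b) {x : ℝ} (hx : 0 < x) :
    HasDerivAt (fun x : ℝ => upperIncompleteGamma a (b * x ^ (1 / a)))
      (-(b ^ a / a * Real.exp (-(b * x ^ (1 / a))))) x := by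
  have hy : 0 < b * x ^ (1 / a) := mul_pos hb (Real.rpow_pos_of_pos hx _)
  have hinner : HasDerivAt (fun x : ℝ => b * x ^ (1 / a)) (b * (1 / a * x ^ (1 / a - 1))) x :=
    (Real.hasDerivAt_rpow_const (Or.inl hx.ne')).const_mul b
  have := (uig_hasDerivAt ha hy).comp x hinner
  refine this.congr_deriv ?_; symm
  have h1 : (b * x ^ (1 / a)) ^ (a - 1) = b ^ (a - 1) * x ^ (1 / a * (a - 1)) := by
    rw [Real.mul_rpow hb.le (Real.rpow_nonneg hx.le _), ← Real.rpow_mul hx.le]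
  rw [h1]
  have h2 : b ^ (a - 1) * b = b ^ a := by
    rw [← Real.rpow_add_one hb.ne' (a - 1)]; ring_nf
  have h3 : x ^ (1 / a * (a - 1)) * x ^ (1 / a - 1) = 1 := by
    rw [← Real.rpow_add hx]
    have : 1 / a * (a - 1) + (1 / a - 1) = 0 := by field_simp; ring
    rw [this, Real.rpow_zero]
  calc -(b ^ a / a * Real.exp (-(b * x ^ (1 / a))))
      = -((b ^ (a - 1) * b) / a * Real.exp (-(b * x ^ (1 / a)))
          * (x ^ (1 / a * (a - 1)) * x ^ (1 / a - 1))) := by rw [h2, h3]; ring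
    _ = -(b ^ (a - 1) * x ^ (1 / a * (a - 1)) * Real.exp (-(b * x ^ (1 / a))))
          * (b * (1 / a * x ^ (1 / a - 1))) := by ring

lemma comp_continuousOn {a b : ℝ} (ha : 0 < a) (hb : 0 < b) :
    ContinuousOn (fun x : ℝ => upperIncompleteGamma a (b * x ^ (1 / a))) (Set.Ici 0) := by
  have hin : ContinuousOn (fun x : ℝ => b * x ^ (1 / a)) (Set.Ici 0) :=
    continuousOn_const.mul (fun x _ =>
      (Real.continuousAt_rpow_const x (1 / a) (Or.inr (by positivity))).continuousWithinAt)
  refine (uig_continuousOn ha).comp hin ?_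
  intro x hx
  exact Set.mem_Ici.mpr (mul_nonneg hb.le (Real.rpow_nonneg hx _))

lemma comp_strictAntiOn {a b : ℝ} (ha : 0 < a) (hb : 0 < b) :
    StrictAntiOn (fun x : ℝ => upperIncompleteGamma a (b * x ^ (1 / a))) (Set.Ici 0) := by
  refine strictAntiOn_of_deriv_neg (convex_Ici 0) (comp_continuousOn ha hb) ?_
  intro x hx
  rw [interior_Ici] at hx
  rw [(comp_hasDerivAt ha hb hx).deriv]
  have : 0 < b ^ a / a * Real.exp (-(b * x ^ (1 / a))) := by positivity
  linarith

lemma comp_convexOn {a b : ℝ} (ha : 0 < a) (hb : 0 < b) :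
    ConvexOn ℝ (Set.Ici 0) (fun x : ℝ => upperIncompleteGamma a (b * x ^ (1 / a))) := by
  refine (StrictMonoOn.strictConvexOn_of_deriv (convex_Ici 0) (comp_continuousOn ha hb)
    ?_).convexOn
  rw [interior_Ici]
  intro x hx y hy hxy
  rw [(comp_hasDerivAt ha hb hx).deriv, (comp_hasDerivAt ha hb hy).deriv]
  have hexp : Real.exp (-(b * y ^ (1 / a))) < Real.exp (-(b * x ^ (1 / a))) := by
    apply Real.exp_lt_exp.mpr
    have : x ^ (1 / a) < y ^ (1 / a) :=
      Real.rpow_lt_rpow (le_of_lt hx) hxy (by positivity)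
    nlinarith
  have hba : 0 < b ^ a / a := by positivity
  nlinarith

/-- For `a, b > 0` the function `x ↦ Γ(a, b·x^(1/a))` is strictly decreasing on `[0, ∞)`;
moreover, for radii with `∑ R_p^k ≤ M·R^k` one has
`∑_p (1 − Γ(k/2, c·R_p²)/Γ(k/2)) ≤ M·(1 − Γ(k/2, c·R²)/Γ(k/2))`. -/
theorem strictAnti_and_sum_prob_le (a b : ℝ) (ha : 0 < a) (hb : 0 < b) :
    StrictAntiOn (fun x : ℝ => upperIncompleteGamma a (b * x ^ (1 / a))) (Set.Ici 0) ∧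
      ∀ (k M : ℕ), 1 ≤ k → 1 ≤ M → ∀ c : ℝ, 0 < c →
        ∀ (R : Fin M → ℝ) (R₀ : ℝ), (∀ p, 0 ≤ R p) → 0 ≤ R₀ →
          (∑ p, R p ^ k) ≤ (M : ℝ) * R₀ ^ k →
          ∑ p, (1 - upperIncompleteGamma ((k : ℝ) / 2) (c * R p ^ 2) /
                Real.Gamma ((k : ℝ) / 2)) ≤
            (M : ℝ) * (1 - upperIncompleteGamma ((k : ℝ) / 2) (c * R₀ ^ 2) /
                Real.Gamma ((k : ℝ) / 2)) := by
  refine ⟨comp_strictAntiOn ha hb, ?_⟩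
  intro k M hk hM c hc R R₀ hR hR₀ hsum
  have hk0 : (0:ℝ) < (k:ℝ) := by exact_mod_cast hk
  set a' : ℝ := (k : ℝ) / 2 with ha'def
  have ha' : 0 < a' := by positivity
  have hΓ : 0 < Real.Gamma a' := Real.Gamma_pos_of_pos ha'
  set g : ℝ → ℝ :=
    fun x => 1 - upperIncompleteGamma a' (c * x ^ (1 / a')) / Real.Gamma a' with hgdef
  have hkey : ∀ r : ℝ, 0 ≤ r → c * ((r ^ k : ℝ)) ^ (1 / a') = c * r ^ 2 := by
    intro r hr
    have h2k : 1 / a' = 2 / (k : ℝ) := by rw [ha'def, one_div_div]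
    rw [h2k, ← Real.rpow_natCast r k, ← Real.rpow_mul hr]
    have : (k : ℝ) * (2 / (k : ℝ)) = 2 := by field_simp
    rw [this, show (2:ℝ) = ((2:ℕ):ℝ) by norm_num, Real.rpow_natCast]
  have hg_eq : ∀ r : ℝ, 0 ≤ r →
      g (r ^ k) = 1 - upperIncompleteGamma a' (c * r ^ 2) / Real.Gamma a' := by
    intro r hr
    rw [hgdef]
    simp only
    rw [hkey r hr]
  have hgconc : ConcaveOn ℝ (Set.Ici 0) g := by
    have h3 := (((comp_convexOn ha' hc).smul
      (inv_nonneg.mpr hΓ.le)).neg.add_const 1)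
    refine h3.congr ?_
    intro x _
    simp only [hgdef, Pi.add_apply, Pi.neg_apply, smul_eq_mul, div_eq_inv_mul]
    ring
  have hgmono : MonotoneOn g (Set.Ici 0) := by
    intro x hx y hy hxy
    rcases eq_or_lt_of_le hxy with rfl | h
    · exact le_rfl
    · have hlt := comp_strictAntiOn ha' hc hx hy h
      have hlt' : upperIncompleteGamma a' (c * y ^ (1 / a')) ≤
          upperIncompleteGamma a' (c * x ^ (1 / a')) := hlt.le
      simp only [hgdef]
      gcongr
  have hM0 : (0:ℝ) < (M:ℝ) := by exact_mod_cast hM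
  have hw : ∑ _p : Fin M, (M:ℝ)⁻¹ = 1 := by
    simp [Finset.card_univ]
    field_simp
  have hJ := hgconc.le_map_sum (t := Finset.univ) (w := fun _ : Fin M => (M:ℝ)⁻¹)
    (p := fun p => R p ^ k) (fun p _ => by positivity) hw
    (fun p _ => Set.mem_Ici.mpr (pow_nonneg (hR p) k))
  have hle : (∑ p, (M:ℝ)⁻¹ • (R p ^ k)) ≤ R₀ ^ k := by
    rw [← Finset.smul_sum, smul_eq_mul, inv_mul_le_iff₀ hM0]
    exact hsum
  have hmean_mem : (∑ p, (M:ℝ)⁻¹ • (R p ^ k)) ∈ Set.Ici (0:ℝ) := by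
    refine Set.mem_Ici.mpr (Finset.sum_nonneg fun p _ => ?_)
    have := pow_nonneg (hR p) k
    positivity
  have hmono2 := hgmono hmean_mem (Set.mem_Ici.mpr (pow_nonneg hR₀ k)) hle
  calc ∑ p, (1 - upperIncompleteGamma a' (c * R p ^ 2) / Real.Gamma a')
      = ∑ p, g (R p ^ k) := by
        exact Finset.sum_congr rfl fun p _ => (hg_eq (R p) (hR p)).symm
    _ = (M:ℝ) * ∑ p, (M:ℝ)⁻¹ • g (R p ^ k) := by
        rw [← Finset.smul_sum, smul_eq_mul, ← mul_assoc, mul_inv_cancel₀ hM0.ne', one_mul]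
    _ ≤ (M:ℝ) * g (R₀ ^ k) :=
        mul_le_mul_of_nonneg_left (hJ.trans hmono2) hM0.le
    _ = (M:ℝ) * (1 - upperIncompleteGamma a' (c * R₀ ^ 2) / Real.Gamma a') := by
        rw [hg_eq R₀ hR₀]
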